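/- Let H : ℝ → Matrix n n ℂ be a path of Hermitian matrices that is differentiable at s₀, let ω0 : ℝ → ℝ be continuous with ω0(s) an eigenvalue of H(s) for s near s₀, and let Δ > 0 be such that the spectrum of H(s₀) intersected with the closed interval [ω0(s₀) − Δ, ω0(s₀) + Δ] equals {ω0(s₀)}. Let P : ℝ → Matrix n n ℂ be differentiable at s₀, where for each s near s₀, P(s) is the orthogonal projection onto the eigenspace of H(s) for the eigenvalue ω0(s). Then ‖P'(s₀)‖ ≤ 2·‖H'(s₀)‖/Δ. -/

import Mathlib

open scoped Matrix.Norms.L2Operator Topology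

open Matrix in
lemma aux_matrix_ext_mulVec {n : ℕ} {M N : Matrix (Fin n) (Fin n) ℂ}
    (h : ∀ v : Fin n → ℂ, M *ᵥ v = N *ᵥ v) : M = N := by
  ext i j
  have := congrFun (h (Pi.single j 1)) i
  simpa [Matrix.mulVec_single] using this

open Matrix in
lemma aux_proj_mul {n : ℕ} (Hs Ps : Matrix (Fin n) (Fin n) ℂ) (c : ℂ)
    (hidem : Ps * Ps = Ps)
    (hiff : ∀ v : Fin n → ℂ, Hs *ᵥ v = c • v ↔ Ps *ᵥ v = v) :
    Hs * Ps = c • Ps := by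
  apply aux_matrix_ext_mulVec
  intro v
  have hv : Ps *ᵥ (Ps *ᵥ v) = Ps *ᵥ v := by
    rw [Matrix.mulVec_mulVec, hidem]
  have h2 : Hs *ᵥ (Ps *ᵥ v) = c • (Ps *ᵥ v) := (hiff _).mpr hv
  rw [← Matrix.mulVec_mulVec, h2, Matrix.smul_mulVec]

open Matrix in
lemma aux_norm_le_one_of_proj {n : ℕ} {Q : Matrix (Fin n) (Fin n) ℂ}
    (hh : Q.IsHermitian) (hi : Q * Q = Q) : ‖Q‖ ≤ 1 := by
  rcases eq_or_ne Q 0 with h | h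
  · simp [h]
  · have h1 : ‖Q‖ * ‖Q‖ = ‖Q‖ := by
      calc ‖Q‖ * ‖Q‖ = ‖Qᴴ * Q‖ := (Matrix.l2_opNorm_conjTranspose_mul_self Q).symm
      _ = ‖Q‖ := by rw [hh.eq, hi]
    have h2 : ‖Q‖ ≠ 0 := norm_ne_zero_iff.mpr h
    nlinarith [norm_nonneg Q]

open Matrix in
lemma aux_eig_mem_spectrum {n : ℕ} {A : Matrix (Fin n) (Fin n) ℂ} (hA : A.IsHermitian)
    (i : Fin n) : (hA.eigenvalues i : ℂ) ∈ spectrum ℂ A := by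
  rw [spectrum.mem_iff]
  rw [Matrix.isUnit_iff_isUnit_det, isUnit_iff_ne_zero, not_not]
  rw [← Matrix.exists_mulVec_eq_zero_iff]
  refine ⟨⇑(hA.eigenvectorBasis i), ?_, ?_⟩
  · intro h0
    have h1 : ‖hA.eigenvectorBasis i‖ = 1 := (hA.eigenvectorBasis.orthonormal).1 i
    rw [show hA.eigenvectorBasis i = 0 from by simpa using h0, norm_zero] at h1
    norm_num at h1
  · have hv := hA.mulVec_eigenvectorBasis i
    rw [Matrix.sub_mulVec, hv]
    rw [Algebra.algebraMap_eq_smul_one, Matrix.smul_mulVec, Matrix.one_mulVec]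
    ext j
    simp [Complex.real_smul]

open Matrix in
lemma aux_eig_gap {n : ℕ} {A : Matrix (Fin n) (Fin n) ℂ} (hA : A.IsHermitian)
    {lam Δ : ℝ} (hΔ : 0 < Δ)
    (hgap : spectrum ℂ A ∩
        ((fun x : ℝ => (x : ℂ)) '' Set.Icc (lam - Δ) (lam + Δ)) = {(lam : ℂ)}) :
    ∀ i, hA.eigenvalues i ≠ lam → Δ ≤ |hA.eigenvalues i - lam| := by
  intro i hne
  by_contra hlt
  push_neg at hlt
  have hmem : (hA.eigenvalues i : ℂ) ∈ spectrum ℂ A ∩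
      ((fun x : ℝ => (x : ℂ)) '' Set.Icc (lam - Δ) (lam + Δ)) := by
    refine ⟨aux_eig_mem_spectrum hA i, ⟨hA.eigenvalues i, ?_, rfl⟩⟩
    rw [Set.mem_Icc]
    constructor <;> [skip; skip] <;> cases' abs_lt.mp hlt with h1 h2 <;> linarith
  rw [hgap] at hmem
  rw [Set.mem_singleton_iff] at hmem
  exact hne (by exact_mod_cast hmem)

open Matrix in
lemma aux_herm_sub_smul {n : ℕ} {A : Matrix (Fin n) (Fin n) ℂ} (hA : A.IsHermitian)
    (lam : ℝ) : (A - (lam : ℂ) • 1)ᴴ = A - (lam : ℂ) • 1 := by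
  rw [Matrix.conjTranspose_sub, hA.eq, Matrix.conjTranspose_smul]
  simp [Complex.conj_ofReal]

open Matrix in
lemma aux_key_vec {n : ℕ} {A P₀ : Matrix (Fin n) (Fin n) ℂ} (hA : A.IsHermitian)
    (hP₀ : P₀.IsHermitian) {lam Δ : ℝ}
    (heig : ∀ i, hA.eigenvalues i ≠ lam → Δ ≤ |hA.eigenvalues i - lam|)
    (hΔ : 0 ≤ Δ)
    (heigvec : ∀ v : Fin n → ℂ, A *ᵥ v = (lam : ℂ) • v → P₀ *ᵥ v = v)
    (w : EuclideanSpace ℂ (Fin n)) (hw : P₀ *ᵥ (WithLp.equiv 2 (Fin n → ℂ) w) = 0) :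
    Δ * ‖w‖ ≤ ‖(WithLp.equiv 2 (Fin n → ℂ)).symm ((A - (lam : ℂ) • 1) *ᵥ (WithLp.equiv 2 (Fin n → ℂ) w))‖ := by
  classical
  have hb : ∀ i, hA.eigenvectorBasis i = hA.eigenvectorBasis i := fun _ => rfl
  set u : EuclideanSpace ℂ (Fin n) :=
    (WithLp.equiv 2 (Fin n → ℂ)).symm ((A - (lam : ℂ) • 1) *ᵥ (WithLp.equiv 2 (Fin n → ℂ) w)) with hu
  -- eigenvectors for eigenvalue lam are orthogonal to w
  have horth : ∀ i, hA.eigenvalues i = lam → hA.eigenvectorBasis.repr w i = 0 := by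
    intro i hi
    have hbv : A *ᵥ ⇑(hA.eigenvectorBasis i) = (lam : ℂ) • ⇑(hA.eigenvectorBasis i) := by
      rw [hA.mulVec_eigenvectorBasis i, hi]
      ext j; simp [Complex.real_smul]
    have hPb : P₀ *ᵥ ⇑(hA.eigenvectorBasis i) = ⇑(hA.eigenvectorBasis i) := heigvec _ hbv
    rw [hA.eigenvectorBasis.repr_apply_apply]
    rw [EuclideanSpace.inner_eq_star_dotProduct, dotProduct_comm]
    calc dotProduct (star ((WithLp.equiv 2 (Fin n → ℂ)) (hA.eigenvectorBasis i))) ((WithLp.equiv 2 (Fin n → ℂ)) w)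
        = dotProduct (star (P₀ *ᵥ ⇑(hA.eigenvectorBasis i))) ((WithLp.equiv 2 (Fin n → ℂ)) w) := by rw [hPb]; rfl
      _ = dotProduct (star ⇑(hA.eigenvectorBasis i) ᵥ* P₀ᴴ) ((WithLp.equiv 2 (Fin n → ℂ)) w) := by
          rw [Matrix.star_mulVec]
      _ = dotProduct (star ⇑(hA.eigenvectorBasis i)) (P₀ᴴ *ᵥ (WithLp.equiv 2 (Fin n → ℂ)) w) := by
          exact (Matrix.dotProduct_mulVec _ _ _).symm
      _ = 0 := by rw [hP₀.eq, hw, dotProduct_zero]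
  -- repr of u
  have hrepr : ∀ i, hA.eigenvectorBasis.repr u i = ((hA.eigenvalues i : ℂ) - (lam : ℂ)) * hA.eigenvectorBasis.repr w i := by
    intro i
    rw [hA.eigenvectorBasis.repr_apply_apply, hA.eigenvectorBasis.repr_apply_apply]
    rw [EuclideanSpace.inner_eq_star_dotProduct, EuclideanSpace.inner_eq_star_dotProduct,
      dotProduct_comm, dotProduct_comm (WithLp.ofLp w)]
    have h1 : WithLp.ofLp u = (A - (lam : ℂ) • 1) *ᵥ (WithLp.equiv 2 (Fin n → ℂ) w) := by
      rw [hu]; exact (WithLp.equiv 2 (Fin n → ℂ)).apply_symm_apply _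
    rw [h1, Matrix.dotProduct_mulVec]
    have h2 : star ⇑(hA.eigenvectorBasis i) ᵥ* (A - (lam : ℂ) • 1) = star ((A - (lam : ℂ) • 1) *ᵥ ⇑(hA.eigenvectorBasis i)) := by
      rw [Matrix.star_mulVec, aux_herm_sub_smul hA]
    have h3 : (A - (lam : ℂ) • 1) *ᵥ ⇑(hA.eigenvectorBasis i) = ((hA.eigenvalues i : ℂ) - (lam : ℂ)) • ⇑(hA.eigenvectorBasis i) := by
      rw [Matrix.sub_mulVec, hA.mulVec_eigenvectorBasis i, Matrix.smul_mulVec,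
        Matrix.one_mulVec]
      ext j; simp [Complex.real_smul, sub_mul]
    have h4 : ((WithLp.equiv 2 (Fin n → ℂ)) (hA.eigenvectorBasis i) : Fin n → ℂ) = ⇑(hA.eigenvectorBasis i) := rfl
    change _ = _ * dotProduct _ ((WithLp.equiv 2 (Fin n → ℂ)) w)
    rw [h2, h3, star_smul, smul_dotProduct]
    simp [Complex.conj_ofReal, smul_eq_mul]
  -- squared norms
  have hwsq : ‖w‖ ^ 2 = ∑ i, ‖hA.eigenvectorBasis.repr w i‖ ^ 2 := by
    rw [← hA.eigenvectorBasis.repr.norm_map w, PiLp.norm_sq_eq_of_L2]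
  have husq : ‖u‖ ^ 2 = ∑ i, ‖hA.eigenvectorBasis.repr u i‖ ^ 2 := by
    rw [← hA.eigenvectorBasis.repr.norm_map u, PiLp.norm_sq_eq_of_L2]
  have hterm : ∀ i, Δ ^ 2 * ‖hA.eigenvectorBasis.repr w i‖ ^ 2 ≤ ‖hA.eigenvectorBasis.repr u i‖ ^ 2 := by
    intro i
    rcases eq_or_ne (hA.eigenvalues i) lam with hi | hi
    · rw [horth i hi]; simp
    · have h5 := heig i hi
      rw [hrepr i]
      have : ‖((hA.eigenvalues i : ℂ) - (lam : ℂ)) * hA.eigenvectorBasis.repr w i‖ = |hA.eigenvalues i - lam| * ‖hA.eigenvectorBasis.repr w i‖ := by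
        rw [norm_mul]
        congr 1
        rw [show ((hA.eigenvalues i : ℂ) - (lam : ℂ)) = ((hA.eigenvalues i - lam : ℝ) : ℂ) by push_cast; ring]
        exact (Complex.norm_real _).trans (Real.norm_eq_abs _)
      rw [this, mul_pow]
      gcongr
  have hsq : (Δ * ‖w‖) ^ 2 ≤ ‖u‖ ^ 2 := by
    rw [mul_pow, hwsq, husq, Finset.mul_sum]
    exact Finset.sum_le_sum fun i _ => hterm i
  have := Real.sqrt_le_sqrt hsq
  rwa [Real.sqrt_sq (by positivity), Real.sqrt_sq (norm_nonneg _)] at this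

open Matrix in
lemma aux_key_mat {n : ℕ} {A P₀ : Matrix (Fin n) (Fin n) ℂ} (hA : A.IsHermitian)
    (hP₀ : P₀.IsHermitian) {lam Δ : ℝ} (hΔ : 0 < Δ)
    (heig : ∀ i, hA.eigenvalues i ≠ lam → Δ ≤ |hA.eigenvalues i - lam|)
    (heigvec : ∀ v : Fin n → ℂ, A *ᵥ v = (lam : ℂ) • v → P₀ *ᵥ v = v)
    (M : Matrix (Fin n) (Fin n) ℂ) (hM : P₀ * M = 0) :
    Δ * ‖M‖ ≤ ‖(A - (lam : ℂ) • 1) * M‖ := by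
  have hC : (0:ℝ) ≤ ‖(A - (lam : ℂ) • 1) * M‖ / Δ := by positivity
  have hle : ‖M‖ ≤ ‖(A - (lam : ℂ) • 1) * M‖ / Δ := by
    rw [Matrix.l2_opNorm_def]
    refine ContinuousLinearMap.opNorm_le_bound _ hC ?_
    intro x
    set w : EuclideanSpace ℂ (Fin n) :=
      (WithLp.equiv 2 (Fin n → ℂ)).symm (M *ᵥ (WithLp.equiv 2 (Fin n → ℂ) x)) with hwdef
    have hval : ((Matrix.toEuclideanLin ≪≫ₗ LinearMap.toContinuousLinearMap) M) x = w := by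
      simp only [LinearEquiv.trans_apply, LinearMap.coe_toContinuousLinearMap']
      rw [Matrix.toEuclideanLin_apply, hwdef]; rfl
    rw [hval]
    have hw : P₀ *ᵥ (WithLp.equiv 2 (Fin n → ℂ) w) = 0 := by
      rw [hwdef, (WithLp.equiv 2 (Fin n → ℂ)).apply_symm_apply,
        Matrix.mulVec_mulVec, hM, Matrix.zero_mulVec]
    have hkey := aux_key_vec hA hP₀ heig hΔ.le heigvec w hw
    have himg : (WithLp.equiv 2 (Fin n → ℂ)).symm
        ((A - (lam : ℂ) • 1) *ᵥ (WithLp.equiv 2 (Fin n → ℂ) w)) =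
        (WithLp.equiv 2 (Fin n → ℂ)).symm (((A - (lam : ℂ) • 1) * M) *ᵥ
          (WithLp.equiv 2 (Fin n → ℂ) x)) := by
      rw [hwdef, (WithLp.equiv 2 (Fin n → ℂ)).apply_symm_apply, Matrix.mulVec_mulVec]
    rw [himg] at hkey
    have hbound : ‖(WithLp.equiv 2 (Fin n → ℂ)).symm (((A - (lam : ℂ) • 1) * M) *ᵥ
        (WithLp.equiv 2 (Fin n → ℂ) x))‖ ≤ ‖(A - (lam : ℂ) • 1) * M‖ * ‖x‖ :=
      Matrix.l2_opNorm_mulVec _ x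
    clear_value w
    rw [div_mul_eq_mul_div, le_div_iff₀ hΔ, mul_comm]
    exact le_trans hkey hbound
  calc Δ * ‖M‖ ≤ Δ * (‖(A - (lam : ℂ) • 1) * M‖ / Δ) := by
        exact mul_le_mul_of_nonneg_left hle hΔ.le
    _ = ‖(A - (lam : ℂ) • 1) * M‖ := by field_simp

open Matrix in
lemma aux_exists_eigvec {n : ℕ} {A : Matrix (Fin n) (Fin n) ℂ} {lam : ℂ}
    (h : lam ∈ spectrum ℂ A) : ∃ v : Fin n → ℂ, v ≠ 0 ∧ A *ᵥ v = lam • v := by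
  rw [spectrum.mem_iff, Matrix.isUnit_iff_isUnit_det, isUnit_iff_ne_zero, not_not,
    ← Matrix.exists_mulVec_eq_zero_iff] at h
  obtain ⟨v, hv0, hv⟩ := h
  refine ⟨v, hv0, ?_⟩
  rw [Matrix.sub_mulVec, sub_eq_zero, Algebra.algebraMap_eq_smul_one,
    Matrix.smul_mulVec, Matrix.one_mulVec] at hv
  exact hv.symm

open Matrix in
lemma aux_trace_ne_zero {n : ℕ} {P₀ : Matrix (Fin n) (Fin n) ℂ}
    (hh : P₀.IsHermitian) (hi : P₀ * P₀ = P₀) (hne : P₀ ≠ 0) : P₀.trace ≠ 0 := by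
  intro h0
  apply hne
  have key : P₀.trace = ((∑ i, ∑ j, Complex.normSq (P₀ j i) : ℝ) : ℂ) := by
    conv_lhs => rw [← hi]
    nth_rewrite 1 [← hh.eq]
    rw [Matrix.trace]
    push_cast
    refine Finset.sum_congr rfl fun i _ => ?_
    rw [Matrix.diag_apply, Matrix.mul_apply]
    refine Finset.sum_congr rfl fun j _ => ?_
    rw [Matrix.conjTranspose_apply]
    rw [Complex.normSq_eq_conj_mul_self]
    rfl
  rw [key] at h0
  have h1 : (∑ i, ∑ j, Complex.normSq (P₀ j i) : ℝ) = 0 := by exact_mod_cast h0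
  have h2 : ∀ i ∈ (Finset.univ : Finset (Fin n)), ∀ j ∈ (Finset.univ : Finset (Fin n)),
      Complex.normSq (P₀ j i) = 0 := by
    have := (Finset.sum_eq_zero_iff_of_nonneg (fun i _ =>
      Finset.sum_nonneg fun j _ => Complex.normSq_nonneg _)).mp h1
    intro i hi' j hj'
    exact (Finset.sum_eq_zero_iff_of_nonneg (fun j _ => Complex.normSq_nonneg _)).mp
      (this i hi') j hj'
  ext i j
  simpa using Complex.normSq_eq_zero.mp (h2 j (Finset.mem_univ _) i (Finset.mem_univ _))

open Matrix in
/-- First derivative bound for the spectral projector: `‖P'(s₀)‖ ≤ 2‖H'(s₀)‖/Δ`. -/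
theorem stmt1 (n : ℕ) (hn : 1 ≤ n)
    (H P : ℝ → Matrix (Fin n) (Fin n) ℂ) (s₀ : ℝ)
    (H' P' : Matrix (Fin n) (Fin n) ℂ)
    (ω0 : ℝ → ℝ) (Δ : ℝ)
    -- `H` is a path of Hermitian matrices, differentiable at `s₀`
    (hHherm : ∀ᶠ s in 𝓝 s₀, (H s).IsHermitian)
    (hHderiv : HasDerivAt H H' s₀)
    -- `ω0` is continuous, and `ω0 s` is an eigenvalue of `H s` for `s` near `s₀`
    (hω0cont : ContinuousAt ω0 s₀)
    (hω0eig : ∀ᶠ s in 𝓝 s₀, (ω0 s : ℂ) ∈ spectrum ℂ (H s))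
    -- the gap condition at `s₀`
    (hΔpos : 0 < Δ)
    (hgap : spectrum ℂ (H s₀) ∩
        ((fun x : ℝ => (x : ℂ)) '' Set.Icc (ω0 s₀ - Δ) (ω0 s₀ + Δ)) = {(ω0 s₀ : ℂ)})
    -- `P` is differentiable at `s₀`, and near `s₀` each `P s` is the orthogonal
    -- projection onto the eigenspace of `H s` for the eigenvalue `ω0 s`
    (hPderiv : HasDerivAt P P' s₀)
    (hPproj : ∀ᶠ s in 𝓝 s₀, (P s).IsHermitian ∧ P s * P s = P s ∧
        ∀ v : Fin n → ℂ, (H s).mulVec v = (ω0 s : ℂ) • v ↔ (P s).mulVec v = v) :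
    ‖P'‖ ≤ 2 * ‖H'‖ / Δ := by
  classical
  obtain ⟨hP0herm, hP0idem, hP0eig⟩ := hPproj.self_of_nhds
  have hAherm : (H s₀).IsHermitian := hHherm.self_of_nhds
  -- eventual matrix identities
  have hHP : ∀ᶠ s in 𝓝 s₀, H s * P s = ((ω0 s : ℂ)) • P s := by
    filter_upwards [hPproj] with s hs
    exact aux_proj_mul _ _ _ hs.2.1 fun v => hs.2.2 v
  have hPH : ∀ᶠ s in 𝓝 s₀, P s * H s = ((ω0 s : ℂ)) • P s := by
    filter_upwards [hHP, hHherm, hPproj] with s h1 h2 h3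
    calc P s * H s = (P s)ᴴ * (H s)ᴴ := by rw [h2.eq, h3.1.eq]
      _ = (H s * P s)ᴴ := (Matrix.conjTranspose_mul _ _).symm
      _ = ((ω0 s : ℂ) • P s)ᴴ := by rw [h1]
      _ = (ω0 s : ℂ) • P s := by
          rw [Matrix.conjTranspose_smul, h3.1.eq]
          congr 1
          simp [Complex.star_def, Complex.conj_ofReal]
  have hA0 : H s₀ * P s₀ = ((ω0 s₀ : ℂ)) • P s₀ := hHP.self_of_nhds
  have hP0A : P s₀ * H s₀ = ((ω0 s₀ : ℂ)) • P s₀ := hPH.self_of_nhds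
  -- derivative of P * P
  have hPP : HasDerivAt (fun s => P s * P s) (P' * P s₀ + P s₀ * P') s₀ := hPderiv.mul hPderiv
  have hPPeq : (fun s => P s * P s) =ᶠ[𝓝 s₀] P := hPproj.mono fun s hs => hs.2.1
  have eqn0 : P' = P' * P s₀ + P s₀ * P' :=
    hPderiv.unique (hPP.congr_of_eventuallyEq hPPeq.symm)
  -- nontriviality of P s₀
  obtain ⟨v, hv0, hvA⟩ := aux_exists_eigvec hω0eig.self_of_nhds
  have hPv : P s₀ *ᵥ v = v := (hP0eig v).mp hvA
  have hP0ne : P s₀ ≠ 0 := by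
    intro h
    rw [h, Matrix.zero_mulVec] at hPv
    exact hv0 hPv.symm
  have htr0 : (P s₀).trace ≠ 0 := aux_trace_ne_zero hP0herm hP0idem hP0ne
  -- trace derivatives
  let trC : Matrix (Fin n) (Fin n) ℂ →L[ℝ] ℂ :=
    LinearMap.toContinuousLinearMap ((Matrix.traceLinearMap (Fin n) ℝ ℂ))
  have htrC : ∀ M : Matrix (Fin n) (Fin n) ℂ, trC M = M.trace := fun _ => rfl
  have htrP : HasDerivAt (fun s => (P s).trace) P'.trace s₀ := by
    have h := (trC.hasFDerivAt (x := P s₀)).comp_hasDerivAt s₀ hPderiv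
    exact h
  have hHPd : HasDerivAt (fun s => H s * P s) (H' * P s₀ + H s₀ * P') s₀ := hHderiv.mul hPderiv
  have hPHd : HasDerivAt (fun s => P s * H s) (P' * H s₀ + P s₀ * H') s₀ := hPderiv.mul hHderiv
  have htrHP : HasDerivAt (fun s => (H s * P s).trace) ((H' * P s₀ + H s₀ * P').trace) s₀ := by
    have h := (trC.hasFDerivAt (x := H s₀ * P s₀)).comp_hasDerivAt s₀ hHPd
    exact h
  have hne : ∀ᶠ s in 𝓝 s₀, (P s).trace ≠ 0 := htrP.continuousAt.eventually_ne htr0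
  set μ' : ℂ := ((H' * P s₀ + H s₀ * P').trace * (P s₀).trace -
      (H s₀ * P s₀).trace * P'.trace) / (P s₀).trace ^ 2 with hμ'def
  have hf : HasDerivAt (fun s => (H s * P s).trace / (P s).trace) μ' s₀ := htrHP.div htrP htr0
  have hfeq : (fun s => (H s * P s).trace / (P s).trace) =ᶠ[𝓝 s₀]
      (fun s => ((ω0 s : ℂ))) := by
    filter_upwards [hHP, hne] with s h1 h2
    rw [h1, Matrix.trace_smul, smul_eq_mul, mul_div_assoc, div_self h2, mul_one]
  have hfd : HasDerivAt (fun s => ((ω0 s : ℂ))) μ' s₀ := hf.congr_of_eventuallyEq hfeq.symm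
  have hsmulP : HasDerivAt (fun s => (ω0 s : ℂ) • P s)
      ((ω0 s₀ : ℂ) • P' + μ' • P s₀) s₀ := hfd.smul hPderiv
  have eqn1 : H' * P s₀ + H s₀ * P' = (ω0 s₀ : ℂ) • P' + μ' • P s₀ :=
    hHPd.unique (hsmulP.congr_of_eventuallyEq hHP)
  have eqn2 : P' * H s₀ + P s₀ * H' = (ω0 s₀ : ℂ) • P' + μ' • P s₀ :=
    hPHd.unique (hsmulP.congr_of_eventuallyEq hPH)
  -- handy idempotent facts
  have hP3 : ∀ M : Matrix (Fin n) (Fin n) ℂ, (M * P s₀) * P s₀ = M * P s₀ := fun M => by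
    rw [mul_assoc, hP0idem]
  have hP4 : ∀ M : Matrix (Fin n) (Fin n) ℂ, P s₀ * (P s₀ * M) = P s₀ * M := fun M => by
    rw [← mul_assoc, hP0idem]
  have hmid : P s₀ * P' * P s₀ = 0 := by
    have h2 : P s₀ * P' * P s₀ = P s₀ * P' * P s₀ + P s₀ * P' * P s₀ := by
      nth_rewrite 1 [eqn0]
      rw [mul_add, add_mul]
      congr 1
      · rw [← mul_assoc]; exact hP3 _
      · rw [hP4]
    exact left_eq_add.mp h2
  have e1 : H' * P s₀ + H s₀ * (P' * P s₀) = (ω0 s₀ : ℂ) • (P' * P s₀) + μ' • P s₀ := by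
    have h := congrArg (fun M => M * P s₀) eqn1
    simpa only [add_mul, Matrix.smul_mul, mul_assoc, hP0idem] using h
  have e2 : (H s₀ - (ω0 s₀ : ℂ) • 1) * (P' * P s₀) = μ' • P s₀ - H' * P s₀ := by
    rw [Matrix.sub_mul, Matrix.smul_mul, one_mul]
    have h3 : H s₀ * (P' * P s₀) =
        (ω0 s₀ : ℂ) • (P' * P s₀) + μ' • P s₀ - H' * P s₀ := by rw [← e1]; abel
    rw [h3]; abel
  have e3 : P s₀ * ((H s₀ - (ω0 s₀ : ℂ) • 1) * (P' * P s₀)) = 0 := by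
    rw [← mul_assoc]
    have h : P s₀ * (H s₀ - (ω0 s₀ : ℂ) • 1) = 0 := by
      rw [Matrix.mul_sub, hP0A, Matrix.mul_smul, mul_one, sub_self]
    rw [h, zero_mul]
  have E1 : (H s₀ - (ω0 s₀ : ℂ) • 1) * (P' * P s₀) = -((1 - P s₀) * (H' * P s₀)) := by
    have h4 : (1 - P s₀) * ((H s₀ - (ω0 s₀ : ℂ) • 1) * (P' * P s₀)) =
        (H s₀ - (ω0 s₀ : ℂ) • 1) * (P' * P s₀) := by
      rw [Matrix.sub_mul, one_mul, e3, sub_zero]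
    rw [← h4, e2, Matrix.mul_sub]
    rw [Matrix.mul_smul, Matrix.sub_mul, one_mul, hP0idem, sub_self, smul_zero, zero_sub]
  -- symmetric side
  have e1b : P s₀ * P' * H s₀ + P s₀ * H' = (ω0 s₀ : ℂ) • (P s₀ * P') + μ' • P s₀ := by
    have h := congrArg (fun M => P s₀ * M) eqn2
    simpa only [mul_add, Matrix.mul_smul, ← mul_assoc, hP0idem] using h
  have e2b : (P s₀ * P') * (H s₀ - (ω0 s₀ : ℂ) • 1) = μ' • P s₀ - P s₀ * H' := by
    rw [Matrix.mul_sub, Matrix.mul_smul, mul_one]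
    have h3 : P s₀ * P' * H s₀ =
        (ω0 s₀ : ℂ) • (P s₀ * P') + μ' • P s₀ - P s₀ * H' := by rw [← e1b]; abel
    rw [h3]; abel
  have e3b : ((P s₀ * P') * (H s₀ - (ω0 s₀ : ℂ) • 1)) * P s₀ = 0 := by
    rw [mul_assoc]
    have h : (H s₀ - (ω0 s₀ : ℂ) • 1) * P s₀ = 0 := by
      rw [Matrix.sub_mul, hA0, Matrix.smul_mul, one_mul, sub_self]
    rw [h, mul_zero]
  have E2 : (P s₀ * P') * (H s₀ - (ω0 s₀ : ℂ) • 1) = -((P s₀ * H') * (1 - P s₀)) := by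
    have h4 : ((P s₀ * P') * (H s₀ - (ω0 s₀ : ℂ) • 1)) * (1 - P s₀) =
        (P s₀ * P') * (H s₀ - (ω0 s₀ : ℂ) • 1) := by
      rw [Matrix.mul_sub, mul_one, e3b, sub_zero]
    rw [← h4, e2b, Matrix.sub_mul]
    rw [Matrix.smul_mul, Matrix.mul_sub, mul_one, hP0idem, sub_self, smul_zero, zero_sub]
  -- gap machinery
  have heig := aux_eig_gap hAherm hΔpos hgap
  have heigvec : ∀ v : Fin n → ℂ, H s₀ *ᵥ v = ((ω0 s₀ : ℂ)) • v → P s₀ *ᵥ v = v :=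
    fun v hv => (hP0eig v).mp hv
  have hPX : P s₀ * (P' * P s₀) = 0 := by rw [← mul_assoc]; exact hmid
  have hX := aux_key_mat hAherm hP0herm hΔpos heig heigvec (P' * P s₀) hPX
  rw [E1, norm_neg] at hX
  have hMleft : P s₀ * (P s₀ * P')ᴴ = 0 := by
    have h5 : (P s₀ * P' * P s₀)ᴴ = P s₀ * (P s₀ * P')ᴴ := by
      rw [Matrix.conjTranspose_mul (P s₀ * P') (P s₀), hP0herm.eq]
    rw [← h5, hmid, Matrix.conjTranspose_zero]
  have hMimg : (H s₀ - (ω0 s₀ : ℂ) • 1) * (P s₀ * P')ᴴ =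
      (-((P s₀ * H') * (1 - P s₀)))ᴴ := by
    have h6 := congrArg Matrix.conjTranspose E2
    rwa [Matrix.conjTranspose_mul, aux_herm_sub_smul hAherm] at h6
  have hY := aux_key_mat hAherm hP0herm hΔpos heig heigvec ((P s₀ * P')ᴴ) hMleft
  rw [hMimg, Matrix.conjTranspose_neg, norm_neg, Matrix.l2_opNorm_conjTranspose,
    Matrix.l2_opNorm_conjTranspose] at hY
  -- projector norms
  have hQherm : (1 - P s₀).IsHermitian := (Matrix.isHermitian_one).sub hP0herm
  have hQidem : (1 - P s₀) * (1 - P s₀) = 1 - P s₀ := by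
    rw [Matrix.mul_sub, mul_one, Matrix.sub_mul, one_mul, hP0idem]; abel
  have hQn := aux_norm_le_one_of_proj hQherm hQidem
  have hPn := aux_norm_le_one_of_proj hP0herm hP0idem
  have hb1 : ‖(1 - P s₀) * (H' * P s₀)‖ ≤ ‖H'‖ := by
    calc ‖(1 - P s₀) * (H' * P s₀)‖ ≤ ‖1 - P s₀‖ * ‖H' * P s₀‖ := Matrix.l2_opNorm_mul _ _
      _ ≤ 1 * ‖H' * P s₀‖ := mul_le_mul_of_nonneg_right hQn (norm_nonneg _)
      _ = ‖H' * P s₀‖ := one_mul _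
      _ ≤ ‖H'‖ * ‖P s₀‖ := Matrix.l2_opNorm_mul _ _
      _ ≤ ‖H'‖ * 1 := mul_le_mul_of_nonneg_left hPn (norm_nonneg _)
      _ = ‖H'‖ := mul_one _
  have hb2 : ‖(P s₀ * H') * (1 - P s₀)‖ ≤ ‖H'‖ := by
    calc ‖(P s₀ * H') * (1 - P s₀)‖ ≤ ‖P s₀ * H'‖ * ‖1 - P s₀‖ := Matrix.l2_opNorm_mul _ _
      _ ≤ ‖P s₀ * H'‖ * 1 := mul_le_mul_of_nonneg_left hQn (norm_nonneg _)
      _ = ‖P s₀ * H'‖ := mul_one _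
      _ ≤ ‖P s₀‖ * ‖H'‖ := Matrix.l2_opNorm_mul _ _
      _ ≤ 1 * ‖H'‖ := mul_le_mul_of_nonneg_right hPn (norm_nonneg _)
      _ = ‖H'‖ := one_mul _
  have hXf : ‖P' * P s₀‖ ≤ ‖H'‖ / Δ := by
    rw [le_div_iff₀ hΔpos, mul_comm]
    exact le_trans hX hb1
  have hYf : ‖P s₀ * P'‖ ≤ ‖H'‖ / Δ := by
    rw [le_div_iff₀ hΔpos, mul_comm]
    exact le_trans hY hb2
  calc ‖P'‖ = ‖P' * P s₀ + P s₀ * P'‖ := by rw [← eqn0]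
    _ ≤ ‖P' * P s₀‖ + ‖P s₀ * P'‖ := norm_add_le _ _
    _ ≤ ‖H'‖ / Δ + ‖H'‖ / Δ := add_le_add hXf hYf
    _ = 2 * ‖H'‖ / Δ := by ring
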